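/- arXiv:1502.03965 — 3 statements merged into one kernel-verified Lean document; each statement's English description precedes it below -/
import Mathlib

section
/- For any treedepth decomposition F of a graph G, there exists a nice treedepth decomposition F* of G whose height does not exceed the height of F, and such that no vertex has greater depth in F* than in F. -/
/-- A rooted forest on the vertex type `V`, given by a parent function.
Acyclicity guarantees that following parents never returns to a vertex. -/
structure RootedForest (V : Type*) where
  parent : V → Option V
  acyclic : ∀ v : V, ¬ Relation.TransGen (fun a b => parent a = some b) v v

namespace RootedForest

variable {V : Type*} (F : RootedForest V)

/-- `F.Anc x y` means that `y` is an ancestor of `x` in the rooted forest `F`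
(every vertex is an ancestor of itself). -/
def Anc (x y : V) : Prop :=
  Relation.ReflTransGen (fun a b => F.parent a = some b) x y

/-- `F.ProperAnc x y` means that `y` is a proper ancestor of `x`. -/
def ProperAnc (x y : V) : Prop :=
  Relation.TransGen (fun a b => F.parent a = some b) x y

/-- `x` and `y` are in ancestor–descendant relation in `F`. -/
def AncDesc (x y : V) : Prop := F.Anc x y ∨ F.Anc y x

/-- The depth of `v` in `F`: the number of vertices on the path from `v`
to the root of its tree (including both endpoints). -/
noncomputable def depth (v : V) : ℕ := Nat.card {u : V // F.Anc v u}

/-- The height of the forest: the maximum depth of a vertex. -/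
noncomputable def height : ℕ := sSup (Set.range F.depth)

/-- The reach of `v` in `F`. -/
noncomputable def reach (v : V) : ℕ := F.height - F.depth v

/-- The vertex set of the subtree of `F` rooted at `v` (all descendants of `v`,
including `v` itself). -/
def subtree (v : V) : Set V := {u : V | F.Anc u v}

/-- `x` and `y` lie in the same tree of the forest, i.e. they have a common ancestor. -/
def SameTree (x y : V) : Prop := ∃ w : V, F.Anc x w ∧ F.Anc y w

end RootedForest

/-- `F` is a treedepth decomposition of `G`: a rooted forest on the vertex set of `G`
such that the endpoints of every edge are in ancestor–descendant relation. -/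
def SimpleGraph.IsTreedepthDecomp {V : Type*} (G : SimpleGraph V) (F : RootedForest V) : Prop :=
  ∀ ⦃u v : V⦄, G.Adj u v → F.AncDesc u v

/-- The treedepth of `G`: the minimum height of a treedepth decomposition of `G`. -/
noncomputable def SimpleGraph.treedepth {V : Type*} (G : SimpleGraph V) : ℕ :=
  sInf {n : ℕ | ∃ F : RootedForest V, G.IsTreedepthDecomp F ∧ F.height = n}

/-- The open neighborhood of a vertex set `S`: all vertices outside `S`
with a neighbor in `S`. -/
def SimpleGraph.nbhdSet {V : Type*} (G : SimpleGraph V) (S : Set V) : Set V :=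
  {u : V | u ∉ S ∧ ∃ s ∈ S, G.Adj u s}

/-- `Z` is a treedepth-`η` modulator of `G`: removing `Z` leaves a graph of
treedepth at most `η`. -/
def SimpleGraph.IsTdMod {V : Type*} (G : SimpleGraph V) (η : ℕ) (Z : Set V) : Prop :=
  (G.induce Zᶜ).treedepth ≤ η

/-- `G` contains `m` pairwise internally vertex-disjoint paths between `u` and `v`. -/
def IntDisjointPaths {V : Type*} (G : SimpleGraph V) (u v : V) (m : ℕ) : Prop :=
  ∃ P : Fin m → G.Walk u v, (∀ i, (P i).IsPath) ∧
    ∀ i j, i ≠ j → ∀ w, w ∈ (P i).support → w ∈ (P j).support → w = u ∨ w = v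

/-- A treedepth decomposition is nice if every subtree induces a connected subgraph. -/
def IsNiceDecomp {V : Type*} (G : SimpleGraph V) (F : RootedForest V) : Prop :=
  ∀ v : V, (G.induce (F.subtree v)).Connected

namespace RootedForest

variable {V : Type*}

lemma anc_refl (F : RootedForest V) (v : V) : F.Anc v v := Relation.ReflTransGen.refl

lemma Anc.trans' {F : RootedForest V} {a b c : V} (h1 : F.Anc a b) (h2 : F.Anc b c) :
    F.Anc a c := Relation.ReflTransGen.trans h1 h2

lemma ProperAnc.anc {F : RootedForest V} {a b : V} (h : F.ProperAnc a b) : F.Anc a b :=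
  h.to_reflTransGen

lemma properAnc_of_anc_ne {F : RootedForest V} {a b : V} (h : F.Anc a b) (hne : a ≠ b) :
    F.ProperAnc a b := by
  rcases Relation.reflTransGen_iff_eq_or_transGen.mp h with h' | h'
  · exact absurd h'.symm hne
  · exact h'

lemma not_anc_of_properAnc {F : RootedForest V} {a b : V} (h : F.ProperAnc a b) :
    ¬ F.Anc b a := by
  intro h2
  rcases Relation.reflTransGen_iff_eq_or_transGen.mp h2 with h' | h'
  · exact F.acyclic a (h'.symm ▸ h)
  · exact F.acyclic a (h.trans h')

lemma anc_total {F : RootedForest V} {v a b : V} (ha : F.Anc v a) :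
    F.Anc v b → F.Anc a b ∨ F.Anc b a := by
  induction ha using Relation.ReflTransGen.head_induction_on with
  | refl => exact fun hb => Or.inl hb
  | @head x c h' h ih =>
    intro hb
    rcases hb.cases_head with rfl | ⟨d, hd, hdb⟩
    · exact Or.inr (Relation.ReflTransGen.head h' h)
    · rw [h'] at hd
      cases hd
      exact ih hdb

lemma depth_eq_ncard (F : RootedForest V) (v : V) : F.depth v = {u | F.Anc v u}.ncard := by
  rw [← Nat.card_coe_set_eq]
  rfl

lemma anc_of_parent_none {F : RootedForest V} {r u : V} (hr : F.parent r = none)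
    (h : F.Anc r u) : u = r := by
  rcases h.cases_head with rfl | ⟨c, hc, -⟩
  · rfl
  · rw [hr] at hc; cases hc

variable [Fintype V]

lemma depth_le_of_anc {F : RootedForest V} {v w : V} (h : F.Anc v w) :
    F.depth w ≤ F.depth v := by
  rw [depth_eq_ncard, depth_eq_ncard]
  exact Set.ncard_le_ncard (fun u hu => h.trans' hu) (Set.toFinite _)

lemma depth_lt_of_properAnc {F : RootedForest V} {v w : V} (h : F.ProperAnc v w) :
    F.depth w < F.depth v := by
  rw [depth_eq_ncard, depth_eq_ncard]
  refine Set.ncard_lt_ncard ⟨fun u hu => h.anc.trans' hu, fun hsub => ?_⟩ (Set.toFinite _)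
  exact not_anc_of_properAnc h (hsub (F.anc_refl v))

lemma eq_of_anc_of_depth_le {F : RootedForest V} {v w : V} (h : F.Anc v w)
    (hd : F.depth v ≤ F.depth w) : v = w := by
  by_contra hne
  exact (depth_lt_of_properAnc (properAnc_of_anc_ne h hne)).not_ge hd

lemma one_le_depth (F : RootedForest V) (v : V) : 1 ≤ F.depth v := by
  rw [depth_eq_ncard]
  exact (Set.ncard_pos (Set.toFinite _)).mpr ⟨v, F.anc_refl v⟩

lemma depth_le_height (F : RootedForest V) (v : V) : F.depth v ≤ F.height :=
  le_csSup (Set.Finite.bddAbove (Set.finite_range _)) ⟨v, rfl⟩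

lemma height_mono {F F' : RootedForest V} (h : ∀ v, F'.depth v ≤ F.depth v) :
    F'.height ≤ F.height := by
  refine csSup_le' ?_
  rintro n ⟨v, rfl⟩
  exact (h v).trans (F.depth_le_height v)

lemma exists_rparent (F : RootedForest V) (T : Set V) (v : V) :
    ∃ o : Option V,
      ((v ∈ T ∧ ∃ u ∈ T, F.ProperAnc v u) → ∃ p, o = some p) ∧
      ∀ p, o = some p → v ∈ T ∧ p ∈ T ∧ F.ProperAnc v p ∧
        ∀ w ∈ T, F.ProperAnc v w → F.depth w ≤ F.depth p := by
  by_cases h : v ∈ T ∧ ∃ u ∈ T, F.ProperAnc v u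
  · obtain ⟨hvT, u, huT, hu⟩ := h
    obtain ⟨p, hp, hmax⟩ := Set.exists_max_image {u | u ∈ T ∧ F.ProperAnc v u} F.depth
      (Set.toFinite _) ⟨u, huT, hu⟩
    refine ⟨some p, fun _ => ⟨p, rfl⟩, fun q hq => ?_⟩
    cases hq
    exact ⟨hvT, hp.1, hp.2, fun w hw1 hw2 => hmax w ⟨hw1, hw2⟩⟩
  · exact ⟨none, fun hc => absurd hc h, fun p hp => by cases hp⟩

noncomputable def restrict (F : RootedForest V) (T : Set V) : RootedForest V where
  parent v := (F.exists_rparent T v).choose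
  acyclic := by
    have key : ∀ v b, Relation.TransGen (fun a b => (F.exists_rparent T a).choose = some b) v b →
        F.ProperAnc v b := by
      intro v b h
      induction h with
      | single h' => exact ((F.exists_rparent T _).choose_spec.2 _ h').2.2.1
      | tail h1 h2 ih => exact ih.trans ((F.exists_rparent T _).choose_spec.2 _ h2).2.2.1
    exact fun v hv => F.acyclic v (key v v hv)

lemma restrict_parent_spec {F : RootedForest V} {T : Set V} {v p : V}
    (h : (F.restrict T).parent v = some p) :
    v ∈ T ∧ p ∈ T ∧ F.ProperAnc v p ∧ ∀ w ∈ T, F.ProperAnc v w → F.depth w ≤ F.depth p :=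
  (F.exists_rparent T v).choose_spec.2 p h

lemma restrict_parent_some {F : RootedForest V} {T : Set V} {v u : V}
    (hv : v ∈ T) (hu : u ∈ T) (h : F.ProperAnc v u) :
    ∃ p, (F.restrict T).parent v = some p :=
  (F.exists_rparent T v).choose_spec.1 ⟨hv, u, hu, h⟩

lemma restrict_anc_le {F : RootedForest V} {T : Set V} {v u : V}
    (h : (F.restrict T).Anc v u) : F.Anc v u := by
  induction h with
  | refl => exact F.anc_refl v
  | tail h1 h2 ih => exact ih.trans' (restrict_parent_spec h2).2.2.1.anc

lemma restrict_anc_mem {F : RootedForest V} {T : Set V} {v u : V}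
    (h : (F.restrict T).Anc v u) : u = v ∨ u ∈ T := by
  induction h with
  | refl => exact Or.inl rfl
  | tail h1 h2 ih => exact Or.inr (restrict_parent_spec h2).2.1

lemma restrict_anc_of_aux {F : RootedForest V} {T : Set V} :
    ∀ (n : ℕ) (v : V), F.depth v ≤ n → v ∈ T → ∀ u, u ∈ T → F.Anc v u →
      (F.restrict T).Anc v u := by
  intro n
  induction n with
  | zero =>
    intro v hdv _ u _ _
    exact absurd hdv (Nat.not_succ_le_zero 0 ∘ (F.one_le_depth v).trans)
  | succ n ihn =>
    intro v hdv hvT u huT hanc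
    by_cases hvu : v = u
    · exact hvu ▸ Relation.ReflTransGen.refl
    · have hprop := properAnc_of_anc_ne hanc hvu
      obtain ⟨p, hpeq⟩ := restrict_parent_some hvT huT hprop
      obtain ⟨-, hpT, hvp, hmax⟩ := restrict_parent_spec hpeq
      have hpu : F.Anc p u := by
        rcases anc_total hvp.anc hanc with h | h
        · exact h
        · have : u = p := eq_of_anc_of_depth_le h (hmax u huT hprop)
          exact this ▸ F.anc_refl u
      have hdp : F.depth p ≤ n :=
        Nat.lt_succ_iff.mp (lt_of_lt_of_le (depth_lt_of_properAnc hvp) hdv)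
      exact Relation.ReflTransGen.head hpeq (ihn p hdp hpT u huT hpu)

lemma restrict_anc_of {F : RootedForest V} {T : Set V} {v u : V}
    (hv : v ∈ T) (hu : u ∈ T) (h : F.Anc v u) : (F.restrict T).Anc v u :=
  restrict_anc_of_aux (F.depth v) v le_rfl hv u hu h

lemma restrict_depth_le (F : RootedForest V) (T : Set V) (v : V) :
    (F.restrict T).depth v ≤ F.depth v := by
  rw [depth_eq_ncard, depth_eq_ncard]
  exact Set.ncard_le_ncard (fun u hu => restrict_anc_le hu) (Set.toFinite _)

end RootedForest

lemma nice_main {V : Type*} [Fintype V] (G : SimpleGraph V) :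
    ∀ (n : ℕ) (S : Set V), S.ncard ≤ n → ∀ F : RootedForest V,
    (∀ v u, F.parent v = some u → v ∈ S ∧ u ∈ S) →
    (∀ u v, u ∈ S → v ∈ S → G.Adj u v → F.AncDesc u v) →
    ∃ F' : RootedForest V,
      (∀ v u, F'.parent v = some u → v ∈ S ∧ u ∈ S) ∧
      (∀ u v, u ∈ S → v ∈ S → G.Adj u v → F'.AncDesc u v) ∧
      (∀ v ∈ S, (G.induce (F'.subtree v)).Connected) ∧
      (∀ v ∈ S, F'.depth v ≤ F.depth v) := by
  intro n
  induction n with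
  | zero =>
    intro S hS F hcl hdec
    have hSe : S = ∅ := (Set.ncard_eq_zero (Set.toFinite _)).mp (Nat.le_zero.mp hS)
    subst hSe
    refine ⟨⟨fun _ => none, fun v hv => ?_⟩, fun v u h => (by cases h),
      fun u v hu => absurd hu (Set.notMem_empty u),
      fun v hv => absurd hv (Set.notMem_empty v),
      fun v hv => absurd hv (Set.notMem_empty v)⟩
    cases hv with
    | single h => exact nomatch h
    | tail _ h => exact nomatch h
  | succ n ih =>
    intro S hS F hcl hdec
    rcases Set.eq_empty_or_nonempty S with rfl | ⟨x0, hx0⟩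
    · exact ih ∅ (by simp) F hcl hdec
    classical
    set adjS : V → V → Prop := fun a b => G.Adj a b ∧ a ∈ S ∧ b ∈ S with hadjS
    set C : Set V := {y | Relation.ReflTransGen adjS x0 y} with hCdef
    have hx0C : x0 ∈ C := Relation.ReflTransGen.refl
    have hCS : C ⊆ S := by
      intro y hy
      rcases Relation.ReflTransGen.cases_tail hy with h | ⟨c, -, hstep⟩
      · exact h ▸ hx0
      · exact hstep.2.2
    have hCadj : ∀ {u v : V}, u ∈ C → v ∈ S → G.Adj u v → v ∈ C :=
      fun {u v} hu hv hadj => Relation.ReflTransGen.tail hu ⟨hadj, hCS hu, hv⟩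
    -- choose the root of the component C
    obtain ⟨r, ⟨hrC, hrAnc⟩, hrmin⟩ := Set.exists_min_image {u | u ∈ C ∧ F.Anc x0 u} F.depth
      (Set.toFinite _) ⟨x0, hx0C, F.anc_refl x0⟩
    have hDr : ∀ u, u ∈ C → F.Anc x0 u → F.Anc u r := by
      intro u huC hu
      rcases RootedForest.anc_total hu hrAnc with h | h
      · exact h
      · have : r = u := RootedForest.eq_of_anc_of_depth_le h (hrmin u ⟨huC, hu⟩)
        exact this ▸ F.anc_refl r
    have hCm : ∀ c, Relation.ReflTransGen adjS x0 c → ∃ m, m ∈ C ∧ F.Anc x0 m ∧ F.Anc c m := by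
      intro c hc
      induction hc with
      | refl => exact ⟨x0, hx0C, F.anc_refl x0, F.anc_refl x0⟩
      | @tail b c hab hbc ihm =>
        obtain ⟨m, hmC, hmx0, hbm⟩ := ihm
        rcases hdec b c hbc.2.1 hbc.2.2 hbc.1 with h | h
        · -- h : F.Anc b c
          rcases RootedForest.anc_total h hbm with h2 | h2
          · exact ⟨m, hmC, hmx0, h2⟩
          · exact ⟨c, Relation.ReflTransGen.tail hab hbc, hmx0.trans' h2, F.anc_refl c⟩
        · exact ⟨m, hmC, hmx0, h.trans' hbm⟩
    have hCr : ∀ c ∈ C, F.Anc c r := by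
      intro c hc
      obtain ⟨m, h1, h2, h3⟩ := hCm c hc
      exact h3.trans' (hDr m h1 h2)
    -- the two smaller sets
    set T1 : Set V := C \ {r} with hT1def
    set T2 : Set V := S \ C with hT2def
    have hT1S : T1 ⊆ S := fun y hy => hCS hy.1
    have hT2S : T2 ⊆ S := fun y hy => hy.1
    have hT1T2 : ∀ y, y ∈ T1 → y ∈ T2 → False := fun y h1 h2 => h2.2 h1.1
    have hrT1 : r ∉ T1 := fun h => h.2 rfl
    have hrT2 : r ∉ T2 := fun h => h.2 hrC
    have hn1 : T1.ncard ≤ n := by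
      have h1 : T1 ⊆ S \ {r} := fun y hy => ⟨hCS hy.1, hy.2⟩
      have h2 := Set.ncard_le_ncard h1 (Set.toFinite _)
      have h3 : (S \ {r}).ncard = S.ncard - 1 :=
        Set.ncard_diff_singleton_of_mem (hCS hrC)
      omega
    have hn2 : T2.ncard ≤ n := by
      have h1 : T2 ⊆ S \ {x0} := fun y hy => ⟨hy.1, fun h => hy.2 (h ▸ hx0C)⟩
      have h2 := Set.ncard_le_ncard h1 (Set.toFinite _)
      have h3 : (S \ {x0}).ncard = S.ncard - 1 :=
        Set.ncard_diff_singleton_of_mem hx0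
      omega
    -- recursive calls
    obtain ⟨F1, hF1cl, hF1dec, hF1nice, hF1dep⟩ := ih T1 hn1 (F.restrict T1)
      (fun v u h => ⟨(RootedForest.restrict_parent_spec h).1,
        (RootedForest.restrict_parent_spec h).2.1⟩)
      (fun u v hu hv hadj => by
        rcases hdec u v (hT1S hu) (hT1S hv) hadj with h | h
        · exact Or.inl (RootedForest.restrict_anc_of hu hv h)
        · exact Or.inr (RootedForest.restrict_anc_of hv hu h))
    obtain ⟨F2, hF2cl, hF2dec, hF2nice, hF2dep⟩ := ih T2 hn2 (F.restrict T2)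
      (fun v u h => ⟨(RootedForest.restrict_parent_spec h).1,
        (RootedForest.restrict_parent_spec h).2.1⟩)
      (fun u v hu hv hadj => by
        rcases hdec u v (hT2S hu) (hT2S hv) hadj with h | h
        · exact Or.inl (RootedForest.restrict_anc_of hu hv h)
        · exact Or.inr (RootedForest.restrict_anc_of hv hu h))
    -- the combined parent function
    set pf : V → Option V := fun v =>
      if v ∈ T1 then some ((F1.parent v).getD r)
      else if v ∈ T2 then F2.parent v else none with hpf
    have hclass : ∀ a b, pf a = some b →
        (a ∈ T1 ∧ (F1.parent a = some b ∧ b ∈ T1 ∨ F1.parent a = none ∧ b = r)) ∨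
        (a ∈ T2 ∧ F2.parent a = some b ∧ b ∈ T2) := by
      intro a b h
      simp only [hpf] at h
      by_cases h1 : a ∈ T1
      · rw [if_pos h1] at h
        refine Or.inl ⟨h1, ?_⟩
        cases hpa : F1.parent a with
        | none =>
          rw [hpa] at h
          exact Or.inr ⟨rfl, (Option.some.inj h).symm⟩
        | some u =>
          rw [hpa] at h
          simp only [Option.getD_some] at h
          cases Option.some.inj h
          exact Or.inl ⟨rfl, (hF1cl a b hpa).2⟩
      · rw [if_neg h1] at h
        by_cases h2 : a ∈ T2
        · rw [if_pos h2] at h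
          exact Or.inr ⟨h2, h, (hF2cl a b h).2⟩
        · rw [if_neg h2] at h
          exact nomatch h
    have hend1 : ∀ a b, Relation.TransGen (fun x y => F1.parent x = some y) a b → b ∈ T1 := by
      intro a b h
      cases h with
      | single hs => exact (hF1cl _ _ hs).2
      | tail _ hs => exact (hF1cl _ _ hs).2
    have hend2 : ∀ a b, Relation.TransGen (fun x y => F2.parent x = some y) a b → b ∈ T2 := by
      intro a b h
      cases h with
      | single hs => exact (hF2cl _ _ hs).2
      | tail _ hs => exact (hF2cl _ _ hs).2
    have hkey : ∀ a b, Relation.TransGen (fun x y => pf x = some y) a b →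
        (a ∈ T1 ∧ (Relation.TransGen (fun x y => F1.parent x = some y) a b ∨ b = r)) ∨
        (a ∈ T2 ∧ Relation.TransGen (fun x y => F2.parent x = some y) a b) := by
      intro a b h
      induction h with
      | single h' =>
        rcases hclass _ _ h' with ⟨h1, ⟨hs, -⟩ | ⟨-, rfl⟩⟩ | ⟨h2, hs, -⟩
        · exact Or.inl ⟨h1, Or.inl (Relation.TransGen.single hs)⟩
        · exact Or.inl ⟨h1, Or.inr rfl⟩
        · exact Or.inr ⟨h2, Relation.TransGen.single hs⟩
      | @tail b' c hab hbc ihk =>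
        rcases ihk with ⟨ha1, htg | rfl⟩ | ⟨ha2, htg⟩
        · have hb : b' ∈ T1 := hend1 _ _ htg
          rcases hclass _ _ hbc with ⟨hb1, ⟨hs, -⟩ | ⟨-, rfl⟩⟩ | ⟨hb2, -, -⟩
          · exact Or.inl ⟨ha1, Or.inl (htg.tail hs)⟩
          · exact Or.inl ⟨ha1, Or.inr rfl⟩
          · exact (hT1T2 _ hb hb2).elim
        · rcases hclass _ _ hbc with ⟨hb1, -⟩ | ⟨hb2, -⟩
          · exact absurd hb1 hrT1
          · exact absurd hb2 hrT2
        · have hb : b' ∈ T2 := hend2 _ _ htg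
          rcases hclass _ _ hbc with ⟨hb1, -⟩ | ⟨hb2, hs, -⟩
          · exact (hT1T2 _ hb1 hb).elim
          · exact Or.inr ⟨ha2, htg.tail hs⟩
    have hacy : ∀ v, ¬ Relation.TransGen (fun a b => pf a = some b) v v := by
      intro v hv
      rcases hkey v v hv with ⟨h1, htg | hvr⟩ | ⟨h2, htg⟩
      · exact F1.acyclic v htg
      · exact hrT1 (hvr ▸ h1)
      · exact F2.acyclic v htg
    -- step lifts
    have hlift1 : ∀ a b, Relation.ReflTransGen (fun x y => F1.parent x = some y) a b →
        Relation.ReflTransGen (fun x y => pf x = some y) a b := by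
      intro a b h
      induction h with
      | refl => exact Relation.ReflTransGen.refl
      | tail h1 hs ihl =>
        refine ihl.tail ?_
        have hm := hF1cl _ _ hs
        simp only [hpf]
        rw [if_pos hm.1, hs]
        rfl
    have hlift2 : ∀ a b, Relation.ReflTransGen (fun x y => F2.parent x = some y) a b →
        Relation.ReflTransGen (fun x y => pf x = some y) a b := by
      intro a b h
      induction h with
      | refl => exact Relation.ReflTransGen.refl
      | tail h1 hs ihl =>
        refine ihl.tail ?_
        have hm := hF2cl _ _ hs
        simp only [hpf]
        rw [if_neg (fun hx => hT1T2 _ hx hm.1), if_pos hm.1]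
        exact hs
    have hT1r : ∀ (m : ℕ) (c : V), c ∈ T1 → F1.depth c ≤ m →
        Relation.ReflTransGen (fun x y => pf x = some y) c r := by
      intro m
      induction m with
      | zero =>
        intro c hc hdc
        exact absurd hdc (Nat.not_succ_le_zero 0 ∘ (F1.one_le_depth c).trans)
      | succ m ihm =>
        intro c hc hdc
        cases hpa : F1.parent c with
        | none =>
          refine Relation.ReflTransGen.single ?_
          simp only [hpf]
          rw [if_pos hc, hpa]
          rfl
        | some u =>
          have huT : u ∈ T1 := (hF1cl _ _ hpa).2
          have hdu : F1.depth u ≤ m := Nat.lt_succ_iff.mp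
            (lt_of_lt_of_le (RootedForest.depth_lt_of_properAnc (Relation.TransGen.single hpa)) hdc)
          refine Relation.ReflTransGen.head ?_ (ihm u huT hdu)
          simp only [hpf]
          rw [if_pos hc, hpa]
          rfl
    have hCr' : ∀ c ∈ C, Relation.ReflTransGen (fun x y => pf x = some y) c r := by
      intro c hc
      by_cases hcr : c = r
      · exact hcr ▸ Relation.ReflTransGen.refl
      · exact hT1r (F1.depth c) c ⟨hc, hcr⟩ le_rfl
    have hpr : pf r = none := by
      simp only [hpf]
      rw [if_neg hrT1, if_neg hrT2]
    have hancr : ∀ u, Relation.ReflTransGen (fun x y => pf x = some y) r u → u = r := by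
      intro u h
      rcases h.cases_head with h' | ⟨c, hc, -⟩
      · exact h'.symm
      · rw [hpr] at hc; cases hc
    have hconf1 : ∀ u v, Relation.ReflTransGen (fun x y => pf x = some y) u v → v ∈ T1 →
        u ∈ T1 ∧ Relation.ReflTransGen (fun x y => F1.parent x = some y) u v := by
      intro u v h
      induction h using Relation.ReflTransGen.head_induction_on with
      | refl => exact fun hv => ⟨hv, Relation.ReflTransGen.refl⟩
      | @head a c hs hchain ihc =>
        intro hv
        obtain ⟨hcT, hc2⟩ := ihc hv
        rcases hclass _ _ hs with ⟨h1, ⟨hstep, -⟩ | ⟨-, rfl⟩⟩ | ⟨h2, -, hmem⟩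
        · exact ⟨h1, Relation.ReflTransGen.head hstep hc2⟩
        · exact absurd hcT hrT1
        · exact (hT1T2 _ hcT hmem).elim
    have hconf2 : ∀ u v, Relation.ReflTransGen (fun x y => pf x = some y) u v → v ∈ T2 →
        u ∈ T2 ∧ Relation.ReflTransGen (fun x y => F2.parent x = some y) u v := by
      intro u v h
      induction h using Relation.ReflTransGen.head_induction_on with
      | refl => exact fun hv => ⟨hv, Relation.ReflTransGen.refl⟩
      | @head a c hs hchain ihc =>
        intro hv
        obtain ⟨hcT, hc2⟩ := ihc hv
        rcases hclass _ _ hs with ⟨h1, ⟨-, hmem⟩ | ⟨-, rfl⟩⟩ | ⟨h2, hstep, -⟩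
        · exact (hT1T2 _ hmem hcT).elim
        · exact absurd hcT hrT2
        · exact ⟨h2, Relation.ReflTransGen.head hstep hc2⟩
    have hconfC : ∀ u, Relation.ReflTransGen (fun x y => pf x = some y) u r → u ∈ C := by
      intro u h
      induction h using Relation.ReflTransGen.head_induction_on with
      | refl => exact hrC
      | @head a c hs hchain ihc =>
        rcases hclass _ _ hs with ⟨h1, -⟩ | ⟨h2, -, hmem⟩
        · exact h1.1
        · exact (hmem.2 ihc).elim
    have hup1 : ∀ v u, Relation.ReflTransGen (fun x y => pf x = some y) v u → v ∈ T1 →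
        Relation.ReflTransGen (fun x y => F1.parent x = some y) v u ∨ u = r := by
      intro v u h
      induction h using Relation.ReflTransGen.head_induction_on with
      | refl => exact fun _ => Or.inl Relation.ReflTransGen.refl
      | @head a c hs hchain ihc =>
        intro ha
        rcases hclass _ _ hs with ⟨h1, ⟨hstep, hmem⟩ | ⟨-, rfl⟩⟩ | ⟨h2, -, -⟩
        · rcases ihc hmem with h' | h'
          · exact Or.inl (Relation.ReflTransGen.head hstep h')
          · exact Or.inr h'
        · exact Or.inr (hancr u hchain)
        · exact (hT1T2 _ ha h2).elim
    have hup2 : ∀ v u, Relation.ReflTransGen (fun x y => pf x = some y) v u → v ∈ T2 →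
        Relation.ReflTransGen (fun x y => F2.parent x = some y) v u := by
      intro v u h
      induction h using Relation.ReflTransGen.head_induction_on with
      | refl => exact fun _ => Relation.ReflTransGen.refl
      | @head a c hs hchain ihc =>
        intro ha
        rcases hclass _ _ hs with ⟨h1, -⟩ | ⟨h2, hstep, hmem⟩
        · exact (hT1T2 _ h1 ha).elim
        · exact Relation.ReflTransGen.head hstep (ihc hmem)
    -- membership of F1/F2 ancestor chains
    have hmem1 : ∀ v u, Relation.ReflTransGen (fun x y => F1.parent x = some y) v u →
        u = v ∨ u ∈ T1 := by
      intro v u h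
      induction h with
      | refl => exact Or.inl rfl
      | tail _ hs _ => exact Or.inr (hF1cl _ _ hs).2
    -- assemble
    refine ⟨⟨pf, hacy⟩, ?_, ?_, ?_, ?_⟩
    · -- closure
      intro v u h
      rcases hclass v u h with ⟨h1, ⟨-, hmem⟩ | ⟨-, rfl⟩⟩ | ⟨h2, -, hmem⟩
      · exact ⟨hT1S h1, hT1S hmem⟩
      · exact ⟨hT1S h1, hCS hrC⟩
      · exact ⟨hT2S h2, hT2S hmem⟩
    · -- decomposition
      intro u v hu hv hadj
      by_cases huC : u ∈ C
      · by_cases hvC : v ∈ C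
        · by_cases hur : u = r
          · exact Or.inr (hur ▸ hCr' v hvC)
          · by_cases hvr : v = r
            · exact Or.inl (hvr ▸ hCr' u huC)
            · rcases hF1dec u v ⟨huC, hur⟩ ⟨hvC, hvr⟩ hadj with h | h
              · exact Or.inl (hlift1 _ _ h)
              · exact Or.inr (hlift1 _ _ h)
        · exact absurd (hCadj huC hv hadj) hvC
      · by_cases hvC : v ∈ C
        · exact absurd (hCadj hvC hu hadj.symm) huC
        · rcases hF2dec u v ⟨hu, huC⟩ ⟨hv, hvC⟩ hadj with h | h
          · exact Or.inl (hlift2 _ _ h)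
          · exact Or.inr (hlift2 _ _ h)
    · -- niceness
      intro v hv
      by_cases hvC : v ∈ C
      · by_cases hvr : v = r
        · subst hvr
          have hsub : (RootedForest.mk pf hacy).subtree v = C :=
            Set.ext fun u => ⟨fun h => hconfC u h, fun h => hCr' u h⟩
          rw [hsub]
          have hreach : ∀ y, Relation.ReflTransGen adjS x0 y → ∀ (hy : y ∈ C),
              (G.induce C).Reachable ⟨x0, hx0C⟩ ⟨y, hy⟩ := by
            intro y h
            induction h with
            | refl => exact fun hy => SimpleGraph.Reachable.refl _
            | @tail b c hab hbc ihr =>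
              intro hy
              have hbC : b ∈ C := hab
              refine (ihr hbC).trans ?_
              exact SimpleGraph.Adj.reachable (by exact hbc.1)
          have hne : Nonempty ↑C := ⟨⟨x0, hx0C⟩⟩
          refine ⟨?_⟩
          rintro ⟨a, ha⟩ ⟨b, hb⟩
          exact ((hreach a ha ha).symm.trans (hreach b hb hb))
        · have hvT1 : v ∈ T1 := ⟨hvC, hvr⟩
          have hsub : (RootedForest.mk pf hacy).subtree v = F1.subtree v :=
            Set.ext fun u => ⟨fun h => (hconf1 u v h hvT1).2, fun h => hlift1 u v h⟩
          rw [hsub]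
          exact hF1nice v hvT1
      · have hvT2 : v ∈ T2 := ⟨hv, hvC⟩
        have hsub : (RootedForest.mk pf hacy).subtree v = F2.subtree v :=
          Set.ext fun u => ⟨fun h => (hconf2 u v h hvT2).2, fun h => hlift2 u v h⟩
        rw [hsub]
        exact hF2nice v hvT2
    · -- depth
      intro v hv
      by_cases hvC : v ∈ C
      · by_cases hvr : v = r
        · subst hvr
          have hset : {u | (RootedForest.mk pf hacy).Anc v u} = {v} :=
            Set.ext fun u => ⟨fun h => hancr u h, fun h => h ▸ Relation.ReflTransGen.refl⟩
          rw [RootedForest.depth_eq_ncard, hset, Set.ncard_singleton]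
          exact F.one_le_depth v
        · have hvT1 : v ∈ T1 := ⟨hvC, hvr⟩
          have h1 : {u | (RootedForest.mk pf hacy).Anc v u} ⊆
              insert r {u | F1.Anc v u} := by
            intro u hu
            rcases hup1 v u hu hvT1 with h | rfl
            · exact Set.mem_insert_of_mem _ h
            · exact Set.mem_insert _ _
          have hr1 : r ∉ {u | F1.Anc v u} := by
            intro hu
            rcases hmem1 v r hu with h | h
            · exact hvr h.symm
            · exact hrT1 h
          have hr2 : r ∉ {u | (F.restrict T1).Anc v u} := by
            intro hu
            rcases RootedForest.restrict_anc_mem hu with h | h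
            · exact hvr h.symm
            · exact hrT1 h
          have h2 : insert r {u | (F.restrict T1).Anc v u} ⊆ {u | F.Anc v u} := by
            rintro u (rfl | hu)
            · exact hCr v hvC
            · exact RootedForest.restrict_anc_le hu
          calc (RootedForest.mk pf hacy).depth v
              = {u | (RootedForest.mk pf hacy).Anc v u}.ncard :=
                RootedForest.depth_eq_ncard _ v
            _ ≤ (insert r {u | F1.Anc v u}).ncard :=
                Set.ncard_le_ncard h1 (Set.toFinite _)
            _ = {u | F1.Anc v u}.ncard + 1 :=
                Set.ncard_insert_of_notMem hr1 (Set.toFinite _)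
            _ = F1.depth v + 1 := by rw [RootedForest.depth_eq_ncard]
            _ ≤ (F.restrict T1).depth v + 1 := by
                have := hF1dep v hvT1; omega
            _ = {u | (F.restrict T1).Anc v u}.ncard + 1 := by
                rw [RootedForest.depth_eq_ncard]
            _ = (insert r {u | (F.restrict T1).Anc v u}).ncard :=
                (Set.ncard_insert_of_notMem hr2 (Set.toFinite _)).symm
            _ ≤ {u | F.Anc v u}.ncard := Set.ncard_le_ncard h2 (Set.toFinite _)
            _ = F.depth v := (RootedForest.depth_eq_ncard F v).symm
      · have hvT2 : v ∈ T2 := ⟨hv, hvC⟩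
        have h1 : {u | (RootedForest.mk pf hacy).Anc v u} ⊆ {u | F2.Anc v u} :=
          fun u hu => hup2 v u hu hvT2
        calc (RootedForest.mk pf hacy).depth v
            = {u | (RootedForest.mk pf hacy).Anc v u}.ncard :=
              RootedForest.depth_eq_ncard _ v
          _ ≤ {u | F2.Anc v u}.ncard := Set.ncard_le_ncard h1 (Set.toFinite _)
          _ = F2.depth v := (RootedForest.depth_eq_ncard F2 v).symm
          _ ≤ (F.restrict T2).depth v := hF2dep v hvT2
          _ ≤ F.depth v := RootedForest.restrict_depth_le F T2 v

/-- For any treedepth decomposition `F` of a graph `G` there is a nice treedepth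
decomposition `F'` of `G` whose height does not exceed the height of `F`, and in which
no vertex has greater depth than in `F`. -/
theorem exists_nice_decomposition {V : Type*} [Fintype V] (G : SimpleGraph V)
    (F : RootedForest V) (hF : G.IsTreedepthDecomp F) :
    ∃ F' : RootedForest V, G.IsTreedepthDecomp F' ∧ IsNiceDecomp G F' ∧
      F'.height ≤ F.height ∧ ∀ v : V, F'.depth v ≤ F.depth v := by
  obtain ⟨F', hc1, hc2, hc3, hc4⟩ := nice_main G (Set.univ : Set V).ncard Set.univ le_rfl F
    (fun v u _ => ⟨Set.mem_univ v, Set.mem_univ u⟩)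
    (fun u v _ _ h => hF h)
  exact ⟨F', fun u v h => hc2 u v (Set.mem_univ u) (Set.mem_univ v) h,
    fun v => hc3 v (Set.mem_univ v),
    RootedForest.height_mono (fun v => hc4 v (Set.mem_univ v)),
    fun v => hc4 v (Set.mem_univ v)⟩
end

section
/- Let q be a positive integer and G a graph. If u, v ∈ V(G) are joined by q pairwise internally vertex-disjoint paths in G, and F is a treedepth decomposition of G in which u and v are not in ancestor-descendant relation, then height(F) > q. -/
/-- Ancestors of a common vertex are comparable. -/
lemma RootedForest.anc_total_s7 {V : Type*} (F : RootedForest V) {u a b : V}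
    (h1 : F.Anc u a) : F.Anc u b → F.Anc a b ∨ F.Anc b a := by
  induction h1 using Relation.ReflTransGen.head_induction_on with
  | refl => exact fun h2 => Or.inl h2
  | head hstep htail ih =>
    intro h2
    rcases Relation.ReflTransGen.cases_head h2 with h | ⟨c', hc', h2'⟩
    · exact Or.inr (h ▸ Relation.ReflTransGen.head hstep htail)
    · have : c' = _ := Option.some.inj (hc'.symm.trans hstep)
      exact ih (this ▸ h2')

/-- Any walk in a graph with a treedepth decomposition contains a common
ancestor of its endpoints. -/
lemma walk_common_anc {V : Type*} {G : SimpleGraph V} {F : RootedForest V}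
    (hF : G.IsTreedepthDecomp F) {a b : V} (p : G.Walk a b) :
    ∃ w ∈ p.support, F.Anc a w ∧ F.Anc b w := by
  induction p with
  | nil => exact ⟨_, by simp, Relation.ReflTransGen.refl, Relation.ReflTransGen.refl⟩
  | @cons a c b h p ih =>
    obtain ⟨w, hw, hcw, hbw⟩ := ih
    rcases hF h with hac | hca
    · exact ⟨w, by simp [hw], hac.trans hcw, hbw⟩
    · rcases F.anc_total_s7 hcw hca with hwa | haw
      · exact ⟨a, by simp, Relation.ReflTransGen.refl, hbw.trans hwa⟩
      · exact ⟨w, by simp [hw], haw, hbw⟩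

/-- If `u` and `v` are joined by `q` pairwise internally vertex-disjoint paths in `G`
and `F` is a treedepth decomposition of `G` in which `u` and `v` are not in
ancestor-descendant relation, then the height of `F` exceeds `q`. -/
theorem height_gt_of_disjoint_paths {V : Type*} [Fintype V] (q : ℕ) (hq : 1 ≤ q)
    (G : SimpleGraph V) (u v : V)
    (hpaths : IntDisjointPaths G u v q)
    (F : RootedForest V) (hF : G.IsTreedepthDecomp F)
    (hnad : ¬ F.AncDesc u v) :
    q < F.height := by
  obtain ⟨P, hpath, hdisj⟩ := hpaths
  choose w hws hwu hwv using fun i => walk_common_anc hF (P i)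
  have hwu' : ∀ i, w i ≠ u := fun i h => hnad (Or.inr (h ▸ hwv i))
  have hwv' : ∀ i, w i ≠ v := fun i h => hnad (Or.inl (h ▸ hwu i))
  have hinj : Function.Injective w := by
    intro i j hij
    by_contra hne
    rcases hdisj i j hne (w i) (hws i)
        (hij ▸ hws j) with h | h
    · exact hwu' i h
    · exact hwv' i h
  have hg : Function.Injective (fun o : Option (Fin q) =>
      (Option.elim o ⟨u, Relation.ReflTransGen.refl⟩ (fun i => ⟨w i, hwu i⟩) :
        {x : V // F.Anc u x})) := by
    intro o1 o2 h
    match o1, o2 with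
    | none, none => rfl
    | some i, some j => exact congrArg some (hinj (congrArg Subtype.val h))
    | none, some j => exact absurd (congrArg Subtype.val h).symm (hwu' j)
    | some i, none => exact absurd (congrArg Subtype.val h) (hwu' i)
  have hcard : q + 1 ≤ F.depth u := by
    have := Nat.card_le_card_of_injective _ hg
    simpa [RootedForest.depth] using this
  have hle : F.depth u ≤ F.height :=
    le_csSup (Set.Finite.bddAbove (Set.finite_range F.depth)) ⟨u, rfl⟩
  omega
end

section
/- Let G be a connected graph, let H be a connected subgraph of G, and let v ∈ V(G) \ V(H) be a vertex such that N_G(H) ⊆ N_G[v]. Then for any treedepth decomposition T of G there exists a treedepth decomposition T' of G such that (1) height(T') ≤ max(height(T), depth(v, T) + td(G[V(H)])), and (2) all vertices of V(H) belong to T'_v, the subtree of T' rooted at v. -/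
namespace SwitchAux
set_option linter.unusedSectionVars false

open Relation

variable {V : Type*}

theorem runiq (F : RootedForest V) : Relator.RightUnique (fun a b => F.parent a = some b) := by
  intro a b c h1 h2; rw [h1] at h2; exact Option.some.inj h2

theorem anc_total (F : RootedForest V) {x u w : V} (h1 : F.Anc x u) (h2 : F.Anc x w) :
    F.Anc u w ∨ F.Anc w u :=
  Relation.ReflTransGen.total_of_right_unique (runiq F) h1 h2

theorem anc_eq_or_proper (F : RootedForest V) {x y : V} (h : F.Anc x y) :
    x = y ∨ F.ProperAnc x y := by
  rcases Relation.reflTransGen_iff_eq_or_transGen.1 h with h | h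
  · exact Or.inl h.symm
  · exact Or.inr h

theorem properAnc_anc_false (F : RootedForest V) {x y : V} (h1 : F.ProperAnc x y)
    (h2 : F.Anc y x) : False :=
  F.acyclic y (Relation.TransGen.trans_right h2 h1)

theorem anc_antisymm (F : RootedForest V) {x y : V} (h1 : F.Anc x y) (h2 : F.Anc y x) :
    x = y := by
  rcases anc_eq_or_proper F h1 with rfl | h
  · rfl
  · exact absurd (properAnc_anc_false F h h2) (fun f => f)

theorem depth_eq_ncard (F : RootedForest V) (x : V) : F.depth x = {u | F.Anc x u}.ncard := by
  rw [RootedForest.depth, ← Nat.card_coe_set_eq]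
  rfl

theorem depth_lt_of_properAnc [Finite V] (F : RootedForest V) {x y : V}
    (h : F.ProperAnc x y) : F.depth y < F.depth x := by
  rw [depth_eq_ncard, depth_eq_ncard]
  apply Set.ncard_lt_ncard _ (Set.toFinite _)
  constructor
  · intro u hu
    exact (h.to_reflTransGen).trans hu
  · intro hsub
    have : F.Anc y x := hsub Relation.ReflTransGen.refl
    exact properAnc_anc_false F h this

theorem one_le_depth [Finite V] (F : RootedForest V) (x : V) : 1 ≤ F.depth x := by
  rw [depth_eq_ncard]
  have : x ∈ {u | F.Anc x u} := Relation.ReflTransGen.refl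
  exact (Set.ncard_pos (Set.toFinite _)).2 ⟨x, this⟩

theorem depth_le_height [Finite V] (F : RootedForest V) (x : V) : F.depth x ≤ F.height :=
  le_csSup (Set.Finite.bddAbove (Set.finite_range _)) ⟨x, rfl⟩

theorem height_le [Finite V] (F : RootedForest V) {M : ℕ} (h : ∀ x, F.depth x ≤ M) :
    F.height ≤ M :=
  csSup_le' (by rintro n ⟨x, rfl⟩; exact h x)

def ofRank (p : V → Option V) (φ : V → ℕ) (hp : ∀ x y, p x = some y → φ y < φ x) :
    RootedForest V :=
  ⟨p, by
    intro x hx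
    have key : ∀ a b : V, Relation.TransGen (fun a b => p a = some b) a b → φ b < φ a := by
      intro a b h
      induction h with
      | single h => exact hp _ _ h
      | tail _ h ih => exact lt_trans (hp _ _ h) ih
    exact lt_irrefl _ (key x x hx)⟩

theorem depth_le_of_closed [Finite V] (F : RootedForest V) (x : V) (A : Set V) (hx : x ∈ A)
    (hcl : ∀ y ∈ A, ∀ p, F.parent y = some p → p ∈ A) : F.depth x ≤ A.ncard := by
  rw [depth_eq_ncard]
  apply Set.ncard_le_ncard _ (Set.toFinite _)
  intro u hu
  simp only [Set.mem_setOf_eq] at hu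
  induction hu with
  | refl => exact hx
  | tail h1 h2 ih => exact hcl _ ih _ h2

theorem exists_decomp (α : Type*) [Finite α] (A : SimpleGraph α) :
    ∃ F : RootedForest α, A.IsTreedepthDecomp F := by
  obtain ⟨n, ⟨e⟩⟩ := Finite.exists_equiv_fin α
  classical
  let p : α → Option α := fun a =>
    if (e a : ℕ) = 0 then none
    else some (e.symm ⟨(e a : ℕ) - 1, by have := (e a).isLt; omega⟩)
  have hp : ∀ x y, p x = some y → (e y : ℕ) < (e x : ℕ) := by
    intro x y h
    simp only [p] at h
    split at h
    · simp at h
    · rename_i hx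
      rw [← Option.some.inj h, Equiv.apply_symm_apply]
      exact Nat.sub_lt (Nat.pos_of_ne_zero hx) Nat.one_pos
  refine ⟨ofRank p (fun a => (e a : ℕ)) hp, ?_⟩
  have key : ∀ (m : ℕ) (a b : α), (e a : ℕ) ≤ m → (e b : ℕ) ≤ (e a : ℕ) →
      (ofRank p (fun a => (e a : ℕ)) hp).Anc a b := by
    intro m
    induction m with
    | zero =>
      intro a b ha hb
      have : a = b := by apply e.injective; apply Fin.ext; omega
      exact this ▸ Relation.ReflTransGen.refl
    | succ m ih =>
      intro a b ha hb
      rcases eq_or_lt_of_le hb with heq | hlt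
      · have : a = b := by apply e.injective; apply Fin.ext; omega
        exact this ▸ Relation.ReflTransGen.refl
      · have hx : (e a : ℕ) ≠ 0 := by omega
        have hstep : p a = some (e.symm ⟨(e a : ℕ) - 1, by have := (e a).isLt; omega⟩) := by
          simp only [p, if_neg hx]
        have hea' : (e (e.symm ⟨(e a : ℕ) - 1, by have := (e a).isLt; omega⟩) : ℕ)
            = (e a : ℕ) - 1 := by rw [Equiv.apply_symm_apply]
        exact Relation.ReflTransGen.head hstep (ih _ b (by omega) (by omega))
  intro u w hadj
  rcases le_total (e u : ℕ) (e w : ℕ) with h | h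
  · exact Or.inr (key n w u (by have := (e w).isLt; omega) h)
  · exact Or.inl (key n u w (by have := (e u).isLt; omega) h)

theorem exists_opt (α : Type*) [Finite α] (A : SimpleGraph α) :
    ∃ F : RootedForest α, A.IsTreedepthDecomp F ∧ F.height ≤ A.treedepth := by
  have hne : {n : ℕ | ∃ F : RootedForest α, A.IsTreedepthDecomp F ∧ F.height = n}.Nonempty := by
    obtain ⟨F, hF⟩ := exists_decomp α A
    exact ⟨F.height, F, hF, rfl⟩
  obtain ⟨F, hF, hh⟩ := Nat.sInf_mem hne
  exact ⟨F, hF, le_of_eq hh⟩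

open Classical in
noncomputable def pickMax [Finite V] (f : V → ℕ) (s : Set V) : Option V :=
  if h : s.Nonempty then some (Set.exists_max_image s f (Set.toFinite s) h).choose else none

theorem pickMax_spec [Finite V] {f : V → ℕ} {s : Set V} {m : V} (h : pickMax f s = some m) :
    m ∈ s ∧ ∀ a ∈ s, f a ≤ f m := by
  unfold pickMax at h
  split at h
  · rename_i hne
    obtain ⟨h1, h2⟩ := (Set.exists_max_image s f (Set.toFinite s) hne).choose_spec
    rw [← Option.some.inj h]
    exact ⟨h1, h2⟩
  · simp at h

theorem pickMax_some [Finite V] {f : V → ℕ} {s : Set V} (h : s.Nonempty) :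
    ∃ m, pickMax f s = some m := by
  unfold pickMax; rw [dif_pos h]; exact ⟨_, rfl⟩

theorem pickMax_none [Finite V] {f : V → ℕ} {s : Set V} (h : pickMax f s = none) :
    s = ∅ := by
  unfold pickMax at h
  split at h
  · simp at h
  · rename_i hne; exact Set.not_nonempty_iff_eq_empty.1 hne

section Construction

variable [Finite V] (T : RootedForest V) (Hv : Set V) (v : V) (S : RootedForest ↥Hv)

def isHa (x : V) : Prop := x ∈ Hv ∧ T.ProperAnc v x

def isHo (x : V) : Prop := x ∈ Hv ∧ ¬ T.ProperAnc v x ∧ ¬ T.ProperAnc x v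

open Classical in
noncomputable def sdep (x : V) : ℕ := if h : x ∈ Hv then S.depth ⟨x, h⟩ else 0

def SProp (x y : V) : Prop := ∃ (hx : x ∈ Hv) (hy : y ∈ Hv), S.ProperAnc ⟨x, hx⟩ ⟨y, hy⟩

noncomputable def spV (x : V) : Option V := pickMax T.depth {u | u ∉ Hv ∧ T.ProperAnc x u}

noncomputable def zV : V := (pickMax T.depth {u | isHa T Hv v u}).getD v

open Classical in
noncomputable def newParent (x : V) : Option V :=
  if T.ProperAnc x v then (if T.parent x = some v then some (zV T Hv v) else T.parent x)
  else if x = v then spV T Hv x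
  else if x ∈ Hv then
    (if T.ProperAnc v x then some ((pickMax T.depth {u | isHa T Hv v u ∧ T.ProperAnc x u}).getD v)
     else some ((pickMax (sdep Hv S) {u | isHo T Hv v u ∧ SProp Hv S x u}).getD (zV T Hv v)))
  else spV T Hv x

open Classical in
noncomputable def phi (x : V) : ℕ :=
  if T.ProperAnc x v then T.depth x + {u | isHa T Hv v u}.ncard
  else if x = v then T.depth v
  else if x ∈ Hv then
    (if T.ProperAnc v x then T.depth v + 1 + {u | isHa T Hv v u ∧ T.ProperAnc x u}.ncard
     else T.depth v + {u | isHa T Hv v u}.ncard + sdep Hv S x)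
  else T.depth x

variable {T Hv v S}

theorem isHa_not_desc {x : V} (h : isHa T Hv v x) : ¬ T.ProperAnc x v :=
  fun h2 => T.acyclic v (h.2.trans h2)

theorem isHa_ne_v (hv : v ∉ Hv) {x : V} (h : isHa T Hv v x) : x ≠ v :=
  fun e => hv (e ▸ h.1)

theorem not_properAnc_self (x : V) : ¬ T.ProperAnc x x := T.acyclic x

theorem zV_cases :
    (zV T Hv v = v ∧ ∀ u, ¬ isHa T Hv v u) ∨
    (isHa T Hv v (zV T Hv v) ∧ ∀ u, isHa T Hv v u → T.depth u ≤ T.depth (zV T Hv v)) := by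
  unfold zV
  cases hpm : pickMax T.depth {u | isHa T Hv v u} with
  | none =>
    left
    have := pickMax_none hpm
    refine ⟨rfl, ?_⟩
    intro u hu
    have h2 : u ∈ ({u | isHa T Hv v u} : Set V) := hu
    rw [this] at h2
    exact h2
  | some m =>
    right
    have := pickMax_spec hpm
    simpa using this

theorem phi_z_le (hv : v ∉ Hv) :
    phi T Hv v S (zV T Hv v) ≤ T.depth v + {u | isHa T Hv v u}.ncard := by
  rcases zV_cases (T := T) (Hv := Hv) (v := v) with ⟨hz, _⟩ | ⟨hz, _⟩
  · rw [hz]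
    unfold phi
    rw [if_neg (not_properAnc_self v), if_pos rfl]
    omega
  · unfold phi
    rw [if_neg (isHa_not_desc hz), if_neg (isHa_ne_v hv hz), if_pos hz.1, if_pos hz.2]
    have hsub : {u | isHa T Hv v u ∧ T.ProperAnc (zV T Hv v) u}
        ⊆ {u | isHa T Hv v u} \ {zV T Hv v} := by
      rintro u ⟨hu1, hu2⟩
      refine ⟨hu1, ?_⟩
      simp only [Set.mem_singleton_iff]
      rintro rfl
      exact not_properAnc_self _ hu2
    have h1 : {u | isHa T Hv v u ∧ T.ProperAnc (zV T Hv v) u}.ncard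
        ≤ ({u | isHa T Hv v u} \ {zV T Hv v}).ncard :=
      Set.ncard_le_ncard hsub (Set.toFinite _)
    have h2 : ({u | isHa T Hv v u} \ {zV T Hv v}).ncard = {u | isHa T Hv v u}.ncard - 1 :=
      Set.ncard_diff_singleton_of_mem (s := {u | isHa T Hv v u}) hz
    have h3 : 1 ≤ {u | isHa T Hv v u}.ncard :=
      (Set.ncard_pos (Set.toFinite _)).2 ⟨_, hz⟩
    omega

theorem newParent_rank (hv : v ∉ Hv) :
    ∀ x y, newParent T Hv v S x = some y → phi T Hv v S y < phi T Hv v S x := by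
  intro x y hxy
  unfold newParent at hxy
  split_ifs at hxy with h1 h2 h3 h4 h5
  · -- desc, parent = v : y = z
    have hy : y = zV T Hv v := (Option.some.inj hxy).symm
    subst hy
    have hx : phi T Hv v S x = T.depth x + {u | isHa T Hv v u}.ncard := by
      unfold phi; rw [if_pos h1]
    have hd : T.depth v < T.depth x := depth_lt_of_properAnc T h1
    have := phi_z_le (T := T) (S := S) hv
    omega
  · -- desc, parent ≠ v : y = T.parent x
    have hx : phi T Hv v S x = T.depth x + {u | isHa T Hv v u}.ncard := by
      unfold phi; rw [if_pos h1]
    obtain ⟨c, hcstep, hcv⟩ := Relation.TransGen.head'_iff.1 h1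
    have hcy : c = y := runiq T hcstep hxy
    rw [hcy] at hcv hcstep
    rcases Relation.reflTransGen_iff_eq_or_transGen.1 hcv with heq | hyv
    · exact absurd (heq ▸ hcstep) h2
    · have hy : phi T Hv v S y = T.depth y + {u | isHa T Hv v u}.ncard := by
        unfold phi; rw [if_pos (show T.ProperAnc y v from hyv)]
      have : T.depth y < T.depth x :=
        depth_lt_of_properAnc T (Relation.TransGen.single hcstep)
      omega
  · -- x = v
    rw [h3] at hxy
    have hspec := pickMax_spec hxy
    obtain ⟨⟨hyH, hyanc⟩, _⟩ := hspec
    have hx : phi T Hv v S x = T.depth v := by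
      unfold phi; rw [if_neg h1, if_pos h3]
    have hynotdesc : ¬ T.ProperAnc y v := fun h => T.acyclic v (hyanc.trans h)
    have hynev : y ≠ v := fun e => not_properAnc_self v (e ▸ hyanc)
    have hy : phi T Hv v S y = T.depth y := by
      unfold phi; rw [if_neg hynotdesc, if_neg hynev, if_neg hyH]
    have hd := depth_lt_of_properAnc T hyanc
    omega
  · -- isHa x
    have hx : phi T Hv v S x
        = T.depth v + 1 + {u | isHa T Hv v u ∧ T.ProperAnc x u}.ncard := by
      unfold phi; rw [if_neg h1, if_neg h3, if_pos h4, if_pos h5]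
    cases hpm : pickMax T.depth {u | isHa T Hv v u ∧ T.ProperAnc x u} with
    | none =>
      rw [hpm] at hxy
      have hy : y = v := (Option.some.inj hxy).symm
      rw [hy]
      have : phi T Hv v S v = T.depth v := by
        unfold phi; rw [if_neg (not_properAnc_self v), if_pos rfl]
      omega
    | some u =>
      rw [hpm] at hxy
      have hy : y = u := (Option.some.inj hxy).symm
      rw [hy]
      obtain ⟨⟨hu1, hu2⟩, _⟩ := pickMax_spec hpm
      have hyphi : phi T Hv v S u
          = T.depth v + 1 + {w | isHa T Hv v w ∧ T.ProperAnc u w}.ncard := by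
        unfold phi; rw [if_neg (isHa_not_desc hu1), if_neg (isHa_ne_v hv hu1),
          if_pos hu1.1, if_pos hu1.2]
      have hsub : {w | isHa T Hv v w ∧ T.ProperAnc u w}
          ⊂ {w | isHa T Hv v w ∧ T.ProperAnc x w} := by
        constructor
        · rintro w ⟨hw1, hw2⟩
          exact ⟨hw1, hu2.trans hw2⟩
        · intro hcon
          have : u ∈ {w | isHa T Hv v w ∧ T.ProperAnc u w} := hcon ⟨hu1, hu2⟩
          exact not_properAnc_self u this.2
      have := Set.ncard_lt_ncard hsub (Set.toFinite _)
      omega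
  · -- isHo x
    have hHo : ¬ T.ProperAnc v x := h5
    have hx : phi T Hv v S x
        = T.depth v + {u | isHa T Hv v u}.ncard + sdep Hv S x := by
      unfold phi; rw [if_neg h1, if_neg h3, if_pos h4, if_neg h5]
    have hsx : sdep Hv S x = S.depth ⟨x, h4⟩ := by unfold sdep; rw [dif_pos h4]
    have hsx1 : 1 ≤ sdep Hv S x := by rw [hsx]; exact one_le_depth S _
    cases hpm : pickMax (sdep Hv S) {u | isHo T Hv v u ∧ SProp Hv S x u} with
    | none =>
      rw [hpm] at hxy
      have hy : y = zV T Hv v := (Option.some.inj hxy).symm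
      rw [hy]
      have := phi_z_le (T := T) (S := S) hv
      omega
    | some u =>
      rw [hpm] at hxy
      have hy : y = u := (Option.some.inj hxy).symm
      rw [hy]
      obtain ⟨⟨hu1, hu2⟩, _⟩ := pickMax_spec hpm
      have hyphi : phi T Hv v S u
          = T.depth v + {w | isHa T Hv v w}.ncard + sdep Hv S u := by
        unfold phi
        rw [if_neg hu1.2.2, if_neg (show ¬ u = v from fun e => hv (e ▸ hu1.1)), if_pos hu1.1, if_neg hu1.2.1]
      obtain ⟨hx', hu', hprop⟩ := hu2
      have : S.depth ⟨u, hu'⟩ < S.depth ⟨x, hx'⟩ := depth_lt_of_properAnc S hprop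
      have hsu : sdep Hv S u = S.depth ⟨u, hu'⟩ := by unfold sdep; rw [dif_pos hu']
      have hsx' : S.depth (⟨x, hx'⟩ : ↥Hv) = S.depth ⟨x, h4⟩ := rfl
      omega
  · -- zone1
    obtain ⟨⟨hyH, hyanc⟩, _⟩ := pickMax_spec hxy
    have hx : phi T Hv v S x = T.depth x := by
      unfold phi; rw [if_neg h1, if_neg h3, if_neg h4]
    have hynotdesc : ¬ T.ProperAnc y v := fun h => h1 (hyanc.trans h)
    have hynev : y ≠ v := fun e => h1 (e ▸ hyanc)
    have hy : phi T Hv v S y = T.depth y := by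
      unfold phi; rw [if_neg hynotdesc, if_neg hynev, if_neg hyH]
    have := depth_lt_of_properAnc T hyanc
    omega

end Construction

noncomputable def switchForest {V : Type*} [Finite V] (T : RootedForest V) (Hv : Set V)
    (v : V) (S : RootedForest ↥Hv) (hv : v ∉ Hv) : RootedForest V :=
  ofRank (newParent T Hv v S) (phi T Hv v S) (newParent_rank hv)

section AncLemmas

variable [Finite V] {T : RootedForest V} {Hv : Set V} {v : V} {S : RootedForest ↥Hv}
variable (hv : v ∉ Hv)

theorem anc_step {x y : V} (h : newParent T Hv v S x = some y) :
    (switchForest T Hv v S hv).Anc x y :=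
  Relation.ReflTransGen.single h

theorem L_spl : ∀ (n : ℕ) (x : V), T.depth x ≤ n →
    (x = v ∨ (x ∉ Hv ∧ ¬ T.ProperAnc x v ∧ x ≠ v)) →
    ∀ y, y ∉ Hv → T.ProperAnc x y → (switchForest T Hv v S hv).Anc x y := by
  intro n
  induction n with
  | zero =>
    intro x hx
    exact absurd hx (by have := one_le_depth T x; omega)
  | succ n ih =>
    intro x hdx hcase y hyH hyanc
    obtain ⟨m, hm⟩ := pickMax_some (f := T.depth) (s := {u | u ∉ Hv ∧ T.ProperAnc x u})
      ⟨y, hyH, hyanc⟩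
    obtain ⟨⟨hmH, hmanc⟩, hmax⟩ := pickMax_spec hm
    have hstep : newParent T Hv v S x = some m := by
      unfold newParent
      rcases hcase with rfl | ⟨hxH, hxd, hxv⟩
      · rw [if_neg (not_properAnc_self x), if_pos rfl]
        unfold spV
        exact hm
      · rw [if_neg hxd, if_neg hxv, if_neg hxH]
        unfold spV
        exact hm
    have hdm : T.depth m < T.depth x := depth_lt_of_properAnc T hmanc
    rcases anc_total T hyanc.to_reflTransGen hmanc.to_reflTransGen with hym | hmy
    · rcases anc_eq_or_proper T hym with rfl | hp
      · exact anc_step hv hstep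
      · have h1 := depth_lt_of_properAnc T hp
        have h2 := hmax y ⟨hyH, hyanc⟩
        omega
    · rcases anc_eq_or_proper T hmy with rfl | hp
      · exact anc_step hv hstep
      · have hmcase : m = v ∨ (m ∉ Hv ∧ ¬ T.ProperAnc m v ∧ m ≠ v) := by
          rcases hcase with rfl | ⟨hxH, hxd, hxv⟩
          · right
            exact ⟨hmH, fun h => T.acyclic _ (hmanc.trans h), fun e => T.acyclic _ (e ▸ hmanc)⟩
          · right
            refine ⟨hmH, fun h => hxd (hmanc.trans h), fun e => hxd (e ▸ hmanc)⟩
        exact (anc_step hv hstep).trans (ih m (by omega) hmcase y hyH hp)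

theorem L_chain : ∀ (n : ℕ) (x : V), T.depth x ≤ n → isHa T Hv v x →
    (switchForest T Hv v S hv).Anc x v ∧
    (∀ y, isHa T Hv v y → T.ProperAnc x y → (switchForest T Hv v S hv).Anc x y) := by
  intro n
  induction n with
  | zero =>
    intro x hx
    exact absurd hx (by have := one_le_depth T x; omega)
  | succ n ih =>
    intro x hdx hx
    have hstep0 : newParent T Hv v S x
        = some ((pickMax T.depth {u | isHa T Hv v u ∧ T.ProperAnc x u}).getD v) := by
      unfold newParent
      rw [if_neg (isHa_not_desc hx), if_neg (isHa_ne_v hv hx), if_pos hx.1, if_pos hx.2]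
    cases hpm : pickMax T.depth {u | isHa T Hv v u ∧ T.ProperAnc x u} with
    | none =>
      rw [hpm] at hstep0
      refine ⟨anc_step hv hstep0, ?_⟩
      intro y hy hxy
      have hemp := pickMax_none hpm
      have : y ∈ ({u | isHa T Hv v u ∧ T.ProperAnc x u} : Set V) := ⟨hy, hxy⟩
      rw [hemp] at this
      exact absurd this (Set.notMem_empty y)
    | some m =>
      rw [hpm] at hstep0
      obtain ⟨⟨hm1, hm2⟩, hmax⟩ := pickMax_spec hpm
      have hstep : newParent T Hv v S x = some m := hstep0
      have hdm : T.depth m < T.depth x := depth_lt_of_properAnc T hm2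
      obtain ⟨ihv, ihy⟩ := ih m (by omega) hm1
      refine ⟨(anc_step hv hstep).trans ihv, ?_⟩
      intro y hy hxy
      rcases anc_total T hxy.to_reflTransGen hm2.to_reflTransGen with hym | hmy
      · rcases anc_eq_or_proper T hym with rfl | hp
        · exact anc_step hv hstep
        · have h1 := depth_lt_of_properAnc T hp
          have h2 := hmax y ⟨hy, hxy⟩
          omega
      · rcases anc_eq_or_proper T hmy with rfl | hp
        · exact anc_step hv hstep
        · exact (anc_step hv hstep).trans (ihy y hy hp)

theorem L_z : (switchForest T Hv v S hv).Anc (zV T Hv v) v ∧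
    ∀ y, isHa T Hv v y → (switchForest T Hv v S hv).Anc (zV T Hv v) y := by
  rcases zV_cases (T := T) (Hv := Hv) (v := v) with ⟨hz, hnone⟩ | ⟨hz, hmax⟩
  · rw [hz]
    exact ⟨Relation.ReflTransGen.refl, fun y hy => absurd hy (hnone y)⟩
  · obtain ⟨h1, h2⟩ := L_chain hv (T.depth (zV T Hv v)) _ le_rfl hz
    refine ⟨h1, ?_⟩
    intro y hy
    rcases anc_total T hz.2.to_reflTransGen hy.2.to_reflTransGen with hzy | hyz
    · rcases anc_eq_or_proper T hzy with heq | hp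
      · rw [← heq]
        exact Relation.ReflTransGen.refl
      · exact h2 y hy hp
    · rcases anc_eq_or_proper T hyz with heq | hp
      · rw [heq]
        exact Relation.ReflTransGen.refl
      · have h3 := depth_lt_of_properAnc T hp
        have h4 := hmax y hy
        omega

theorem L_desc : ∀ (n : ℕ) (x : V), T.depth x ≤ n → T.ProperAnc x v →
    (switchForest T Hv v S hv).Anc x (zV T Hv v) ∧
    (∀ y, T.ProperAnc y v → T.ProperAnc x y → (switchForest T Hv v S hv).Anc x y) := by
  intro n
  induction n with
  | zero =>
    intro x hx
    exact absurd hx (by have := one_le_depth T x; omega)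
  | succ n ih =>
    intro x hdx hxv
    obtain ⟨c, hstep0, hcv⟩ := Relation.TransGen.head'_iff.1 hxv
    by_cases hc : c = v
    · have hstep : newParent T Hv v S x = some (zV T Hv v) := by
        unfold newParent
        rw [if_pos hxv, if_pos (hc ▸ hstep0)]
      refine ⟨anc_step hv hstep, ?_⟩
      intro y hyv hxy
      obtain ⟨c', hstep', hc'y⟩ := Relation.TransGen.head'_iff.1 hxy
      have hcc : c' = c := runiq T hstep' hstep0
      rw [hcc, hc] at hc'y
      exact absurd (properAnc_anc_false T hyv hc'y) not_false
    · have hstep : newParent T Hv v S x = some c := by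
        unfold newParent
        rw [if_pos hxv, if_neg (show ¬ T.parent x = some v from fun h => by
          rw [hstep0] at h; exact hc (Option.some.inj h))]
        exact hstep0
      have hcv' : T.ProperAnc c v := by
        rcases Relation.reflTransGen_iff_eq_or_transGen.1 hcv with heq | h
        · exact absurd heq.symm hc
        · exact h
      have hdc : T.depth c < T.depth x := depth_lt_of_properAnc T (.single hstep0)
      obtain ⟨ihz, ihy⟩ := ih c (by omega) hcv'
      refine ⟨(anc_step hv hstep).trans ihz, ?_⟩
      intro y hyv hxy
      obtain ⟨c', hstep', hc'y⟩ := Relation.TransGen.head'_iff.1 hxy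
      have hcc : c' = c := runiq T hstep' hstep0
      rw [hcc] at hc'y
      rcases anc_eq_or_proper T hc'y with rfl | hp
      · exact anc_step hv hstep
      · exact (anc_step hv hstep).trans (ihy y hyv hp)

theorem L_ho : ∀ (n : ℕ) (x : V), sdep Hv S x ≤ n → isHo T Hv v x →
    (switchForest T Hv v S hv).Anc x (zV T Hv v) ∧
    (∀ y, isHo T Hv v y → SProp Hv S x y → (switchForest T Hv v S hv).Anc x y) := by
  intro n
  induction n with
  | zero =>
    intro x hx hho
    have : sdep Hv S x = S.depth ⟨x, hho.1⟩ := by unfold sdep; rw [dif_pos hho.1]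
    have := one_le_depth S (⟨x, hho.1⟩ : ↥Hv)
    omega
  | succ n ih =>
    intro x hdx hx
    have hstep0 : newParent T Hv v S x
        = some ((pickMax (sdep Hv S) {u | isHo T Hv v u ∧ SProp Hv S x u}).getD (zV T Hv v)) := by
      unfold newParent
      rw [if_neg hx.2.2, if_neg (show ¬ x = v from fun e => hv (e ▸ hx.1)), if_pos hx.1,
        if_neg hx.2.1]
    cases hpm : pickMax (sdep Hv S) {u | isHo T Hv v u ∧ SProp Hv S x u} with
    | none =>
      rw [hpm] at hstep0
      refine ⟨anc_step hv hstep0, ?_⟩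
      intro y hy hxy
      have hemp := pickMax_none hpm
      have : y ∈ ({u | isHo T Hv v u ∧ SProp Hv S x u} : Set V) := ⟨hy, hxy⟩
      rw [hemp] at this
      exact absurd this (Set.notMem_empty y)
    | some m =>
      rw [hpm] at hstep0
      obtain ⟨⟨hm1, hm2⟩, hmax⟩ := pickMax_spec hpm
      have hstep : newParent T Hv v S x = some m := hstep0
      obtain ⟨hx2, hm', hpxm⟩ := hm2
      have hsm : sdep Hv S m = S.depth ⟨m, hm'⟩ := by unfold sdep; rw [dif_pos hm']
      have hsx : sdep Hv S x = S.depth ⟨x, hx2⟩ := by unfold sdep; rw [dif_pos hx2]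
      have hdm : S.depth (⟨m, hm'⟩ : ↥Hv) < S.depth ⟨x, hx2⟩ := depth_lt_of_properAnc S hpxm
      obtain ⟨ihz, ihy⟩ := ih m (by omega) hm1
      refine ⟨(anc_step hv hstep).trans ihz, ?_⟩
      intro y hy hxy
      obtain ⟨hx1, hy1, hpxy⟩ := hxy
      rcases anc_total S hpxy.to_reflTransGen hpxm.to_reflTransGen with hym | hmy
      · rcases anc_eq_or_proper S hym with heq | hp
        · have heq' : y = m := congrArg Subtype.val heq
          rw [heq']
          exact anc_step hv hstep
        · have h1 := depth_lt_of_properAnc S hp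
          have h2 := hmax y ⟨hy, hx1, hy1, hpxy⟩
          have hsy : sdep Hv S y = S.depth ⟨y, hy1⟩ := by unfold sdep; rw [dif_pos hy1]
          omega
      · rcases anc_eq_or_proper S hmy with heq | hp
        · have heq' : m = y := congrArg Subtype.val heq
          rw [← heq']
          exact anc_step hv hstep
        · exact (anc_step hv hstep).trans (ihy y hy ⟨hm', hy1, hp⟩)

theorem L_desc_full {x : V} (hd : T.ProperAnc x v) :
    (switchForest T Hv v S hv).Anc x v :=
  ((L_desc hv (T.depth x) x le_rfl hd).1).trans (L_z hv).1

theorem L_sub {x : V} (hx : x ∈ Hv) : (switchForest T Hv v S hv).Anc x v := by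
  by_cases hd : T.ProperAnc x v
  · exact L_desc_full hv hd
  · by_cases ha : T.ProperAnc v x
    · exact (L_chain hv (T.depth x) x le_rfl ⟨hx, ha⟩).1
    · exact ((L_ho hv (sdep Hv S x) x le_rfl ⟨hx, ha, hd⟩).1).trans (L_z hv).1

end AncLemmas

section DepthBounds

variable [Finite V] {T : RootedForest V} {Hv : Set V} {v : V} {S : RootedForest ↥Hv}
variable (hv : v ∉ Hv)
include hv

theorem B2_eq :
    {u : V | T.Anc v u ∧ u ∉ Hv} = {u : V | T.Anc v u} \ {u : V | isHa T Hv v u} := by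
  ext u
  simp only [Set.mem_setOf_eq, Set.mem_diff]
  constructor
  · rintro ⟨h1, h2⟩
    exact ⟨h1, fun h => h2 h.1⟩
  · rintro ⟨h1, h2⟩
    refine ⟨h1, fun hu => ?_⟩
    rcases anc_eq_or_proper T h1 with heq | hp
    · exact hv (heq ▸ hu)
    · exact h2 ⟨hu, hp⟩

theorem haSet_subset : {u : V | isHa T Hv v u} ⊆ {u : V | T.Anc v u} :=
  fun _ hu => hu.2.to_reflTransGen

theorem B2_ncard :
    {u : V | T.Anc v u ∧ u ∉ Hv}.ncard = T.depth v - {u : V | isHa T Hv v u}.ncard := by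
  rw [B2_eq hv, Set.ncard_diff (haSet_subset hv) (Set.toFinite _), ← depth_eq_ncard]

theorem ha_ncard_le : {u : V | isHa T Hv v u}.ncard ≤ T.depth v := by
  rw [depth_eq_ncard]
  exact Set.ncard_le_ncard (haSet_subset hv) (Set.toFinite _)

theorem B2_closed :
    ∀ y ∈ {u : V | T.Anc v u ∧ u ∉ Hv}, ∀ p, newParent T Hv v S y = some p →
      p ∈ {u : V | T.Anc v u ∧ u ∉ Hv} := by
  rintro y ⟨hy1, hy2⟩ p hp
  have hnd : ¬ T.ProperAnc y v := fun h => properAnc_anc_false T h hy1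
  by_cases hyv : y = v
  · unfold newParent at hp
    rw [if_neg hnd, if_pos hyv] at hp
    obtain ⟨⟨hp1, hp2⟩, _⟩ := pickMax_spec hp
    rw [hyv] at hp2
    exact ⟨hp2.to_reflTransGen, hp1⟩
  · unfold newParent at hp
    rw [if_neg hnd, if_neg hyv, if_neg hy2] at hp
    obtain ⟨⟨hp1, hp2⟩, _⟩ := pickMax_spec hp
    exact ⟨hy1.trans hp2.to_reflTransGen, hp1⟩

theorem core_closed :
    ∀ y ∈ {u : V | T.Anc v u ∧ u ∉ Hv} ∪ {u : V | isHa T Hv v u},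
      ∀ p, newParent T Hv v S y = some p →
        p ∈ {u : V | T.Anc v u ∧ u ∉ Hv} ∪ {u : V | isHa T Hv v u} := by
  rintro y (hy | hy) p hp
  · exact Or.inl (B2_closed hv y hy p hp)
  · unfold newParent at hp
    rw [if_neg (isHa_not_desc hy), if_neg (isHa_ne_v hv hy), if_pos hy.1, if_pos hy.2] at hp
    cases hpm : pickMax T.depth {u | isHa T Hv v u ∧ T.ProperAnc y u} with
    | none =>
      rw [hpm] at hp
      have hpv : p = v := (Option.some.inj hp).symm
      rw [hpv]
      exact Or.inl ⟨Relation.ReflTransGen.refl, hv⟩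
    | some m =>
      rw [hpm] at hp
      have hpm' := (pickMax_spec hpm).1
      have hpmm : p = m := (Option.some.inj hp).symm
      rw [hpmm]
      exact Or.inr hpm'.1

theorem zV_mem_core :
    zV T Hv v ∈ {u : V | T.Anc v u ∧ u ∉ Hv} ∪ {u : V | isHa T Hv v u} := by
  rcases zV_cases (T := T) (Hv := Hv) (v := v) with ⟨hz, _⟩ | ⟨hz, _⟩
  · rw [hz]; exact Or.inl ⟨Relation.ReflTransGen.refl, hv⟩
  · exact Or.inr hz

theorem core_ncard :
    ({u : V | T.Anc v u ∧ u ∉ Hv} ∪ {u : V | isHa T Hv v u}).ncard ≤ T.depth v := by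
  calc ({u : V | T.Anc v u ∧ u ∉ Hv} ∪ {u : V | isHa T Hv v u}).ncard
      ≤ {u : V | T.Anc v u ∧ u ∉ Hv}.ncard + {u : V | isHa T Hv v u}.ncard :=
        Set.ncard_union_le _ _
    _ ≤ T.depth v := by
        have h1 := B2_ncard (T := T) hv
        have h2 := ha_ncard_le (T := T) hv
        omega

theorem D_out {x : V} (hx1 : x ∉ Hv) (hx2 : ¬ T.ProperAnc x v) (hx3 : x ≠ v) :
    (switchForest T Hv v S hv).depth x ≤ T.depth x := by
  have key : (switchForest T Hv v S hv).depth x ≤ {u : V | T.Anc x u ∧ u ∉ Hv}.ncard := by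
    refine depth_le_of_closed _ x {u : V | T.Anc x u ∧ u ∉ Hv}
      ⟨Relation.ReflTransGen.refl, hx1⟩ ?_
    rintro y ⟨hy1, hy2⟩ p hp
    have hp' : newParent T Hv v S y = some p := hp
    have hnv : ¬ T.Anc x v := by
      intro h
      rcases anc_eq_or_proper T h with heq | hpp
      · exact hx3 heq
      · exact hx2 hpp
    have hnd : ¬ T.ProperAnc y v := fun h => hnv (hy1.trans h.to_reflTransGen)
    have hyv : y ≠ v := fun e => hnv (e ▸ hy1)
    unfold newParent at hp'
    rw [if_neg hnd, if_neg hyv, if_neg hy2] at hp'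
    obtain ⟨⟨hp1, hp2⟩, _⟩ := pickMax_spec hp'
    exact ⟨hy1.trans hp2.to_reflTransGen, hp1⟩
  calc (switchForest T Hv v S hv).depth x ≤ {u : V | T.Anc x u ∧ u ∉ Hv}.ncard := key
    _ ≤ {u : V | T.Anc x u}.ncard :=
        Set.ncard_le_ncard (fun u hu => hu.1) (Set.toFinite _)
    _ = T.depth x := (depth_eq_ncard T x).symm

theorem D_v : (switchForest T Hv v S hv).depth v ≤ T.depth v := by
  have key : (switchForest T Hv v S hv).depth v ≤ {u : V | T.Anc v u ∧ u ∉ Hv}.ncard :=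
    depth_le_of_closed _ v _ ⟨Relation.ReflTransGen.refl, hv⟩
      (fun y hy p hp => B2_closed hv y hy p hp)
  calc (switchForest T Hv v S hv).depth v ≤ _ := key
    _ ≤ {u : V | T.Anc v u}.ncard :=
        Set.ncard_le_ncard (fun u hu => hu.1) (Set.toFinite _)
    _ = T.depth v := (depth_eq_ncard T v).symm

theorem D_ha {x : V} (hx : isHa T Hv v x) :
    (switchForest T Hv v S hv).depth x ≤ T.depth v := by
  have key := depth_le_of_closed (switchForest T Hv v S hv) x
    ({u : V | T.Anc v u ∧ u ∉ Hv} ∪ {u : V | isHa T Hv v u}) (Or.inr hx)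
    (fun y hy p hp => core_closed hv y hy p hp)
  exact key.trans (core_ncard hv)

theorem D_desc {x : V} (hd : T.ProperAnc x v) :
    (switchForest T Hv v S hv).depth x ≤ T.depth x := by
  have key : (switchForest T Hv v S hv).depth x ≤
      ({u : V | T.Anc x u ∧ T.ProperAnc u v} ∪
        ({u : V | T.Anc v u ∧ u ∉ Hv} ∪ {u : V | isHa T Hv v u})).ncard := by
    refine depth_le_of_closed _ x
      ({u : V | T.Anc x u ∧ T.ProperAnc u v} ∪
        ({u : V | T.Anc v u ∧ u ∉ Hv} ∪ {u : V | isHa T Hv v u}))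
      (Or.inl ⟨Relation.ReflTransGen.refl, hd⟩) ?_
    rintro y (⟨hy1, hy2⟩ | hy) p hp
    · have hp' : newParent T Hv v S y = some p := hp
      unfold newParent at hp'
      rw [if_pos hy2] at hp'
      by_cases hpv : T.parent y = some v
      · rw [if_pos hpv] at hp'
        have hpz : p = zV T Hv v := (Option.some.inj hp').symm
        rw [hpz]
        exact Or.inr (zV_mem_core hv)
      · rw [if_neg hpv] at hp'
        obtain ⟨c, hstep0, hcv⟩ := Relation.TransGen.head'_iff.1 hy2
        have hcp : c = p := runiq T hstep0 hp'
        rw [hcp] at hstep0 hcv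
        rcases Relation.reflTransGen_iff_eq_or_transGen.1 hcv with heq | hppp
        · exact absurd (heq ▸ hstep0) hpv
        · exact Or.inl ⟨hy1.tail hp', hppp⟩
    · exact Or.inr (core_closed hv y hy p hp)
  have hBxcard : {u : V | T.Anc x u ∧ T.ProperAnc u v}.ncard = T.depth x - T.depth v := by
    have hsub : {u : V | T.Anc v u} ⊆ {u : V | T.Anc x u} :=
      fun u hu => hd.to_reflTransGen.trans hu
    have heq : {u : V | T.Anc x u ∧ T.ProperAnc u v}
        = {u : V | T.Anc x u} \ {u : V | T.Anc v u} := by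
      ext u
      simp only [Set.mem_setOf_eq, Set.mem_diff]
      constructor
      · rintro ⟨h1, h2⟩
        exact ⟨h1, fun h => properAnc_anc_false T h2 h⟩
      · rintro ⟨h1, h2⟩
        refine ⟨h1, ?_⟩
        rcases anc_total T h1 hd.to_reflTransGen with huv | hvu
        · rcases anc_eq_or_proper T huv with heq2 | hp2
          · exact absurd (heq2 ▸ Relation.ReflTransGen.refl) h2
          · exact hp2
        · exact absurd hvu h2
    rw [heq, Set.ncard_diff hsub (Set.toFinite _), ← depth_eq_ncard, ← depth_eq_ncard]
  have hcorecard := core_ncard (T := T) (Hv := Hv) (v := v) hv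
  have hdlt : T.depth v < T.depth x := depth_lt_of_properAnc T hd
  calc (switchForest T Hv v S hv).depth x ≤ _ := key
    _ ≤ {u : V | T.Anc x u ∧ T.ProperAnc u v}.ncard +
        ({u : V | T.Anc v u ∧ u ∉ Hv} ∪ {u : V | isHa T Hv v u}).ncard :=
          Set.ncard_union_le _ _
    _ ≤ T.depth x := by omega

theorem D_ho {x : V} (hx : isHo T Hv v x) :
    (switchForest T Hv v S hv).depth x ≤ T.depth v + S.height := by
  have key : (switchForest T Hv v S hv).depth x ≤
      ({u : V | ∃ (hu : u ∈ Hv), isHo T Hv v u ∧ S.Anc ⟨x, hx.1⟩ ⟨u, hu⟩} ∪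
        ({u : V | T.Anc v u ∧ u ∉ Hv} ∪ {u : V | isHa T Hv v u})).ncard := by
    refine depth_le_of_closed _ x
      ({u : V | ∃ (hu : u ∈ Hv), isHo T Hv v u ∧ S.Anc ⟨x, hx.1⟩ ⟨u, hu⟩} ∪
        ({u : V | T.Anc v u ∧ u ∉ Hv} ∪ {u : V | isHa T Hv v u}))
      (Or.inl ⟨hx.1, hx, Relation.ReflTransGen.refl⟩) ?_
    rintro y (⟨hy1, hyo, hyanc⟩ | hy) p hp
    · have hp' : newParent T Hv v S y = some p := hp
      unfold newParent at hp'
      rw [if_neg hyo.2.2, if_neg (show ¬ y = v from fun e => hv (e ▸ hy1)), if_pos hy1,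
        if_neg hyo.2.1] at hp'
      cases hpm : pickMax (sdep Hv S) {u | isHo T Hv v u ∧ SProp Hv S y u} with
      | none =>
        rw [hpm] at hp'
        have hpz : p = zV T Hv v := (Option.some.inj hp').symm
        rw [hpz]
        exact Or.inr (zV_mem_core hv)
      | some m =>
        rw [hpm] at hp'
        obtain ⟨⟨hm1, hm2⟩, _⟩ := pickMax_spec hpm
        have hpmm : p = m := (Option.some.inj hp').symm
        rw [hpmm]
        obtain ⟨hy', hm', hprop⟩ := hm2
        exact Or.inl ⟨hm', hm1, hyanc.trans hprop.to_reflTransGen⟩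
    · exact Or.inr (core_closed hv y hy p hp)
  have hSimgcard : {u : V | ∃ (hu : u ∈ Hv), isHo T Hv v u ∧ S.Anc ⟨x, hx.1⟩ ⟨u, hu⟩}.ncard
      ≤ S.height := by
    have hsub : {u : V | ∃ (hu : u ∈ Hv), isHo T Hv v u ∧ S.Anc ⟨x, hx.1⟩ ⟨u, hu⟩}
        ⊆ Subtype.val '' {g : ↥Hv | S.Anc ⟨x, hx.1⟩ g} := by
      rintro u ⟨hu, huo, huanc⟩
      exact ⟨⟨u, hu⟩, huanc, rfl⟩
    calc {u : V | ∃ (hu : u ∈ Hv), isHo T Hv v u ∧ S.Anc ⟨x, hx.1⟩ ⟨u, hu⟩}.ncard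
        ≤ (Subtype.val '' {g : ↥Hv | S.Anc ⟨x, hx.1⟩ g}).ncard :=
          Set.ncard_le_ncard hsub (Set.toFinite _)
      _ = {g : ↥Hv | S.Anc ⟨x, hx.1⟩ g}.ncard :=
          Set.ncard_image_of_injective _ Subtype.val_injective
      _ = S.depth ⟨x, hx.1⟩ := (depth_eq_ncard S _).symm
      _ ≤ S.height := depth_le_height S _
  have hcorecard := core_ncard (T := T) (Hv := Hv) (v := v) hv
  calc (switchForest T Hv v S hv).depth x ≤ _ := key
    _ ≤ {u : V | ∃ (hu : u ∈ Hv), isHo T Hv v u ∧ S.Anc ⟨x, hx.1⟩ ⟨u, hu⟩}.ncard +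
        ({u : V | T.Anc v u ∧ u ∉ Hv} ∪ {u : V | isHa T Hv v u}).ncard :=
          Set.ncard_union_le _ _
    _ ≤ T.depth v + S.height := by omega

theorem height_bound :
    (switchForest T Hv v S hv).height ≤ max T.height (T.depth v + S.height) := by
  apply height_le
  intro x
  by_cases h1 : T.ProperAnc x v
  · exact le_max_of_le_left ((D_desc hv h1).trans (depth_le_height T x))
  · by_cases h2 : x = v
    · rw [h2]
      exact le_max_of_le_left ((D_v hv).trans (depth_le_height T v))
    · by_cases h3 : x ∈ Hv
      · by_cases h4 : T.ProperAnc v x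
        · exact le_max_of_le_left ((D_ha hv ⟨h3, h4⟩).trans (depth_le_height T v))
        · exact le_max_of_le_right (D_ho hv ⟨h3, h4, h1⟩)
      · exact le_max_of_le_left ((D_out hv h3 h1 h2).trans (depth_le_height T x))

end DepthBounds

section Edges

variable [Finite V] {G : SimpleGraph V} {T : RootedForest V} {Hv : Set V} {v : V}
  {S : RootedForest ↥Hv}
variable (hv : v ∉ Hv) (hT : G.IsTreedepthDecomp T)
  (hS : (G.induce Hv).IsTreedepthDecomp S)
  (hN : G.nbhdSet Hv ⊆ insert v (G.neighborSet v))
include hv hT hS hN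

theorem edge_pres (w u : V) (hadj : G.Adj w u) (hU : T.ProperAnc w u) :
    (switchForest T Hv v S hv).AncDesc w u := by
  by_cases hw1 : T.ProperAnc w v
  · -- w strictly below v in T
    rcases anc_total T hU.to_reflTransGen hw1.to_reflTransGen with huv | hvu
    · rcases anc_eq_or_proper T huv with heq | hp
      · rw [heq]
        exact Or.inl (L_desc_full hv hw1)
      · exact Or.inl ((L_desc hv (T.depth w) w le_rfl hw1).2 u hp hU)
    · rcases anc_eq_or_proper T hvu with heq | hp
      · rw [← heq]
        exact Or.inl (L_desc_full hv hw1)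
      · by_cases huH : u ∈ Hv
        · exact Or.inl (((L_desc hv (T.depth w) w le_rfl hw1).1).trans
            ((L_z hv).2 u ⟨huH, hp⟩))
        · exact Or.inl ((L_desc_full hv hw1).trans
            (L_spl hv (T.depth v) v le_rfl (Or.inl rfl) u huH hp))
  · by_cases hw2 : w = v
    · subst hw2
      by_cases huH : u ∈ Hv
      · exact Or.inr (L_chain hv (T.depth u) u le_rfl ⟨huH, hU⟩).1
      · exact Or.inl (L_spl hv (T.depth w) w le_rfl (Or.inl rfl) u huH hU)
    · by_cases hwH : w ∈ Hv
      · by_cases hwa : T.ProperAnc v w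
        · -- w in Ha
          by_cases huH : u ∈ Hv
          · exact Or.inl ((L_chain hv (T.depth w) w le_rfl ⟨hwH, hwa⟩).2 u
              ⟨huH, hwa.trans hU⟩ hU)
          · exact Or.inl (((L_chain hv (T.depth w) w le_rfl ⟨hwH, hwa⟩).1).trans
              (L_spl hv (T.depth v) v le_rfl (Or.inl rfl) u huH (hwa.trans hU)))
        · -- w in Ho
          have hwo : isHo T Hv v w := ⟨hwH, hwa, hw1⟩
          have hwz : (switchForest T Hv v S hv).Anc w v :=
            ((L_ho hv (sdep Hv S w) w le_rfl hwo).1).trans (L_z hv).1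
          by_cases huH : u ∈ Hv
          · by_cases hud : T.ProperAnc u v
            · exact absurd (hU.trans hud) hw1
            · by_cases hua : T.ProperAnc v u
              · exact Or.inl (((L_ho hv (sdep Hv S w) w le_rfl hwo).1).trans
                  ((L_z hv).2 u ⟨huH, hua⟩))
              · -- u in Ho as well: use S
                have huo : isHo T Hv v u := ⟨huH, hua, hud⟩
                have hadj' : (G.induce Hv).Adj ⟨w, hwH⟩ ⟨u, huH⟩ := hadj
                rcases hS hadj' with hS1 | hS2
                · rcases anc_eq_or_proper S hS1 with heq | hp
                  · exact absurd (congrArg Subtype.val heq) (G.ne_of_adj hadj)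
                  · exact Or.inl ((L_ho hv (sdep Hv S w) w le_rfl hwo).2 u huo
                      ⟨hwH, huH, hp⟩)
                · rcases anc_eq_or_proper S hS2 with heq | hp
                  · exact absurd (congrArg Subtype.val heq) (G.ne_of_adj hadj.symm)
                  · exact Or.inr ((L_ho hv (sdep Hv S u) u le_rfl huo).2 w hwo
                      ⟨huH, hwH, hp⟩)
          · -- u outside H, adjacent to w ∈ Hv
            have humem : u ∈ G.nbhdSet Hv := ⟨huH, w, hwH, hadj.symm⟩
            rcases Set.mem_insert_iff.1 (hN humem) with huv | hunb
            · rw [huv]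
              exact Or.inl hwz
            · have hadjvu : G.Adj v u := (SimpleGraph.mem_neighborSet G v u).1 hunb
              rcases hT hadjvu with hvu | huv
              · -- T.Anc v u
                rcases anc_eq_or_proper T hvu with heq | hp
                · rw [← heq]
                  exact Or.inl hwz
                · exact Or.inl (hwz.trans
                    (L_spl hv (T.depth v) v le_rfl (Or.inl rfl) u huH hp))
              · -- T.Anc u v
                rcases anc_eq_or_proper T huv with heq | hp
                · rw [heq]
                  exact Or.inl hwz
                · exact absurd (hU.trans hp) hw1
      · -- w outside Hv, not below v, not v
        by_cases huH : u ∈ Hv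
        · have hwmem : w ∈ G.nbhdSet Hv := ⟨hwH, u, huH, hadj⟩
          rcases Set.mem_insert_iff.1 (hN hwmem) with hwv | hwnb
          · exact absurd hwv hw2
          · have hadjvw : G.Adj v w := (SimpleGraph.mem_neighborSet G v w).1 hwnb
            rcases hT hadjvw with hvw | hwv
            · rcases anc_eq_or_proper T hvw with heq | hp
              · exact absurd heq.symm hw2
              · exact Or.inr ((L_sub hv huH).trans
                  (L_spl hv (T.depth v) v le_rfl (Or.inl rfl) w hwH hp))
            · rcases anc_eq_or_proper T hwv with heq | hp
              · exact absurd heq hw2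
              · exact absurd hp hw1
        · exact Or.inl (L_spl hv (T.depth w) w le_rfl (Or.inr ⟨hwH, hw1, hw2⟩) u huH hU)

end Edges

end SwitchAux


/-- Let `G` be a connected graph, `H` a connected subgraph of `G`, and
`v ∈ V(G) \ V(H)` with `N_G(H) ⊆ N_G[v]`. For any treedepth decomposition `T` of `G`
there is a treedepth decomposition `T'` of `G` with
`height T' ≤ max (height T) (depth v T + td(G[V(H)]))` in which all vertices of `H`
belong to the subtree rooted at `v`. -/
theorem switch_lemma {V : Type*} [Fintype V] (G : SimpleGraph V) (hG : G.Connected)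
    (H : G.Subgraph) (hH : H.Connected)
    (v : V) (hv : v ∉ H.verts)
    (hN : G.nbhdSet H.verts ⊆ insert v (G.neighborSet v))
    (T : RootedForest V) (hT : G.IsTreedepthDecomp T) :
    ∃ T' : RootedForest V, G.IsTreedepthDecomp T' ∧
      T'.height ≤ max T.height (T.depth v + (G.induce H.verts).treedepth) ∧
      H.verts ⊆ T'.subtree v := by
  classical
  obtain ⟨S, hS, hSh⟩ := SwitchAux.exists_opt ↥H.verts (G.induce H.verts)
  refine ⟨SwitchAux.switchForest T H.verts v S hv, ?_, ?_, ?_⟩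
  · intro u w hadj
    rcases hT hadj with h | h
    · rcases SwitchAux.anc_eq_or_proper T h with heq | hp
      · rw [heq]
        exact Or.inl Relation.ReflTransGen.refl
      · exact SwitchAux.edge_pres hv hT hS hN u w hadj hp
    · rcases SwitchAux.anc_eq_or_proper T h with heq | hp
      · rw [heq]
        exact Or.inl Relation.ReflTransGen.refl
      · exact (SwitchAux.edge_pres hv hT hS hN w u hadj.symm hp).symm
  · refine (SwitchAux.height_bound hv).trans ?_
    exact max_le_max le_rfl (by omega)
  · intro x hx
    exact SwitchAux.L_sub hv hx
end
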